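/- (Upper estimate of the inner-product sum, 0 ≤ q < 1) Suppose 0 ≤ q < 1. For all natural numbers r, s, r', s', k with r + s = r' + s' and r ≥ r', one has ∑_{i=0}^{r'} q^{(r-i)(r'-i) + k(r-i) + k(r'-i)}·[r']_q!·[s']_q!·binom(r,i)_q·binom(s,r'-i)_q ≤ q^{k(r-r')}·[r+s]_q!, where terms with i > r or r' - i > s vanish since the corresponding q-binomial coefficient is 0. -/
import Mathlib


/-- The q-integer `[n]_q = (1 - q^n)/(1 - q)`. -/
noncomputable def qInt (q : ℝ) (n : ℕ) : ℝ := (1 - q ^ n) / (1 - q)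

/-- The q-factorial `[n]_q! = [1]_q ⋯ [n]_q`, with `[0]_q! = 1`. -/
noncomputable def qFact (q : ℝ) : ℕ → ℝ
  | 0 => 1
  | n + 1 => qFact q n * qInt q (n + 1)

/-- The q-binomial coefficient `binom(n,m)_q`, with value `0` when `m > n`. -/
noncomputable def qBinom (q : ℝ) (n m : ℕ) : ℝ :=
  if m ≤ n then qFact q n / (qFact q m * qFact q (n - m)) else 0

variable {q : ℝ}

lemma qInt_pos (h0 : 0 ≤ q) (h1 : q < 1) {n : ℕ} (hn : 0 < n) : 0 < qInt q n := by
  have h : q ^ n < 1 := pow_lt_one₀ h0 h1 hn.ne'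
  exact div_pos (by linarith) (by linarith)

lemma qFact_pos (h0 : 0 ≤ q) (h1 : q < 1) (n : ℕ) : 0 < qFact q n := by
  induction n with
  | zero => norm_num [qFact]
  | succ n ih => exact mul_pos ih (qInt_pos h0 h1 n.succ_pos)

lemma qBinom_nonneg (h0 : 0 ≤ q) (h1 : q < 1) (n m : ℕ) : 0 ≤ qBinom q n m := by
  unfold qBinom
  split
  · have := qFact_pos h0 h1 n
    have := qFact_pos h0 h1 m
    have := qFact_pos h0 h1 (n - m)
    positivity
  · exact le_refl _

lemma qBinom_zero_right (h0 : 0 ≤ q) (h1 : q < 1) (n : ℕ) : qBinom q n 0 = 1 := by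
  have := (qFact_pos h0 h1 n).ne'
  simp [qBinom, qFact, this]

lemma qBinom_self (h0 : 0 ≤ q) (h1 : q < 1) (n : ℕ) : qBinom q n n = 1 := by
  have := (qFact_pos h0 h1 n).ne'
  simp [qBinom, qFact, this]

lemma qBinom_of_lt {n m : ℕ} (h : n < m) : qBinom q n m = 0 := by
  simp [qBinom, Nat.not_le.mpr h]

lemma qInt_add (h1 : q < 1) (a b : ℕ) :
    qInt q (a + b) = qInt q a + q ^ a * qInt q b := by
  have h : (1 : ℝ) - q ≠ 0 := by intro h; linarith [sub_eq_zero.mp h]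
  unfold qInt
  rw [pow_add]
  field_simp
  ring

lemma qPascal (h0 : 0 ≤ q) (h1 : q < 1) (n t : ℕ) (ht : 1 ≤ t) :
    qBinom q (n + 1) t = q ^ (n + 1 - t) * qBinom q n (t - 1) + qBinom q n t := by
  obtain ⟨t, rfl⟩ : ∃ t', t = t' + 1 := ⟨t - 1, by omega⟩
  rcases lt_trichotomy (t + 1) (n + 1) with hlt | heq | hgt
  · -- t + 1 ≤ n
    have htn : t + 1 ≤ n := by omega
    have e1 : t + 1 ≤ n + 1 := by omega
    have e2 : t ≤ n := by omega
    simp only [qBinom, if_pos e1, if_pos e2, if_pos htn, Nat.add_sub_cancel]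
    have hnt : n + 1 - (t + 1) = n - t := by omega
    have hsplit : n - t = (n - (t + 1)) + 1 := by omega
    rw [hnt, hsplit]
    have hfs : qFact q (n + 1) = qFact q n * qInt q (n + 1) := rfl
    have hft : qFact q (t + 1) = qFact q t * qInt q (t + 1) := rfl
    have hfnt : qFact q (n - (t + 1) + 1) = qFact q (n - (t + 1)) * qInt q (n - (t + 1) + 1) := rfl
    have hint : qInt q (n + 1) = qInt q (n - (t + 1) + 1) + q ^ (n - (t + 1) + 1) * qInt q (t + 1) := by
      rw [← qInt_add h1]
      congr 1
      omega
    have p1 := (qFact_pos h0 h1 n).ne'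
    have p2 := (qFact_pos h0 h1 t).ne'
    have p3 := (qFact_pos h0 h1 (n - (t + 1))).ne'
    have p4 := (qInt_pos h0 h1 (Nat.succ_pos t)).ne'
    have p5 := (qInt_pos h0 h1 (Nat.succ_pos (n - (t + 1)))).ne'
    rw [hfs, hft, hfnt, hint]
    field_simp
    ring
  · -- t + 1 = n + 1
    have : t = n := by omega
    subst this
    rw [qBinom_self h0 h1, qBinom_of_lt (Nat.lt_succ_self t), Nat.add_sub_cancel,
      Nat.sub_self, pow_zero, qBinom_self h0 h1]
    ring
  · -- t + 1 > n + 1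
    rw [qBinom_of_lt (by omega), qBinom_of_lt (by omega), qBinom_of_lt (by omega)]
    ring

lemma qPascal_if (h0 : 0 ≤ q) (h1 : q < 1) (s j : ℕ) :
    qBinom q (s + 1) j =
      (if j = 0 then 0 else q ^ (s + 1 - j) * qBinom q s (j - 1)) + qBinom q s j := by
  rcases Nat.eq_zero_or_pos j with rfl | hj
  · simp [qBinom_zero_right h0 h1]
  · rw [if_neg hj.ne', qPascal h0 h1 s j hj]

lemma qVandermonde (h0 : 0 ≤ q) (h1 : q < 1) :
    ∀ s r t : ℕ, ∑ i ∈ Finset.range (t + 1),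
      q ^ ((r - i) * (t - i)) * qBinom q r i * qBinom q s (t - i) = qBinom q (r + s) t := by
  intro s
  induction s with
  | zero =>
    intro r t
    rw [Finset.sum_eq_single t]
    · simp [qBinom_zero_right h0 h1]
    · intro i hi hne
      have hlt : i < t := by
        simp only [Finset.mem_range] at hi; omega
      rw [qBinom_of_lt (n := 0) (by omega)]
      ring
    · intro h
      exact absurd (Finset.self_mem_range_succ t) h
  | succ s ih =>
    intro r t
    rcases Nat.eq_zero_or_pos t with rfl | ht
    · simp [qBinom_zero_right h0 h1]
    obtain ⟨t, rfl⟩ : ∃ t', t = t' + 1 := ⟨t - 1, by omega⟩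
    have key : ∀ i ∈ Finset.range (t + 1 + 1),
        q ^ ((r - i) * (t + 1 - i)) * qBinom q r i * qBinom q (s + 1) (t + 1 - i) =
        q ^ ((r - i) * (t + 1 - i)) * qBinom q r i *
            ((if t + 1 - i = 0 then 0 else q ^ (s + 1 - (t + 1 - i)) * qBinom q s (t + 1 - i - 1))
              + qBinom q s (t + 1 - i)) := by
      intro i _
      rw [qPascal_if h0 h1]
    rw [Finset.sum_congr rfl key]
    simp only [mul_add, Finset.sum_add_distrib]
    rw [ih r (t + 1)]
    have hsum1 : ∑ i ∈ Finset.range (t + 1 + 1),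
        q ^ ((r - i) * (t + 1 - i)) * qBinom q r i *
          (if t + 1 - i = 0 then 0 else q ^ (s + 1 - (t + 1 - i)) * qBinom q s (t + 1 - i - 1)) =
        q ^ (r + s - t) * ∑ i ∈ Finset.range (t + 1),
          q ^ ((r - i) * (t - i)) * qBinom q r i * qBinom q s (t - i) := by
      rw [Finset.sum_range_succ, if_pos (by omega)]
      rw [Finset.mul_sum]
      rw [mul_zero, add_zero]
      apply Finset.sum_congr rfl
      intro i hi
      have hit : i ≤ t := by simp only [Finset.mem_range] at hi; omega
      have e0 : ¬ (t + 1 - i = 0) := by omega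
      rw [if_neg e0]
      have e1 : t + 1 - i - 1 = t - i := by omega
      rw [e1]
      by_cases hir : i ≤ r
      · by_cases his : t - i ≤ s
        · have e2 : t + 1 - i = (t - i) + 1 := by omega
          have e3 : (r - i) * (t + 1 - i) = (r - i) * (t - i) + (r - i) := by
            rw [e2, Nat.mul_add, Nat.mul_one]
          have e4 : (r - i) * (t + 1 - i) + (s + 1 - (t + 1 - i)) =
              (r + s - t) + (r - i) * (t - i) := by omega
          have hqq : q ^ ((r - i) * (t + 1 - i)) * q ^ (s + 1 - (t + 1 - i)) =
              q ^ (r + s - t) * q ^ ((r - i) * (t - i)) := by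
            rw [← pow_add, ← pow_add, e4]
          linear_combination qBinom q r i * qBinom q s (t - i) * hqq
        · rw [qBinom_of_lt (show s < t - i by omega)]
          ring
      · rw [qBinom_of_lt (show r < i by omega)]
        ring
    rw [hsum1, ih r t]
    have := qPascal h0 h1 (r + s) (t + 1) (by omega)
    have e5 : r + s + 1 - (t + 1) = r + s - t := by omega
    have e6 : t + 1 - 1 = t := by omega
    rw [e5, e6] at this
    rw [show r + (s + 1) = r + s + 1 by omega, this]

/-- Upper estimate of the inner-product sum for `0 ≤ q < 1`. -/
theorem inner_sum_upper_nonneg (q : ℝ) (hq₁ : 0 ≤ q) (hq₂ : q < 1)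
    (r s r' s' k : ℕ) (hsum : r + s = r' + s') (hr : r' ≤ r) :
    ∑ i ∈ Finset.range (r' + 1),
      q ^ ((r - i) * (r' - i) + k * (r - i) + k * (r' - i)) *
        qFact q r' * qFact q s' * qBinom q r i * qBinom q s (r' - i) ≤
    q ^ (k * (r - r')) * qFact q (r + s) := by
  have hV := qVandermonde hq₁ hq₂ s r r'
  have step1 : ∑ i ∈ Finset.range (r' + 1),
      q ^ ((r - i) * (r' - i) + k * (r - i) + k * (r' - i)) *
        qFact q r' * qFact q s' * qBinom q r i * qBinom q s (r' - i) ≤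
      ∑ i ∈ Finset.range (r' + 1),
      (q ^ ((r - i) * (r' - i)) * qBinom q r i * qBinom q s (r' - i)) *
        (q ^ (k * (r - r')) * (qFact q r' * qFact q s')) := by
    apply Finset.sum_le_sum
    intro i hi
    have hi' : i ≤ r' := by simp only [Finset.mem_range] at hi; omega
    have hexp : k * (r - r') + (r - i) * (r' - i) ≤
        (r - i) * (r' - i) + k * (r - i) + k * (r' - i) := by
      have h1 : k * (r - r') ≤ k * (r - i) := Nat.mul_le_mul_left k (by omega)
      omega
    have hpow : q ^ ((r - i) * (r' - i) + k * (r - i) + k * (r' - i)) ≤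
        q ^ (k * (r - r') + (r - i) * (r' - i)) :=
      pow_le_pow_of_le_one hq₁ hq₂.le hexp
    have f1 := (qFact_pos hq₁ hq₂ r').le
    have f2 := (qFact_pos hq₁ hq₂ s').le
    have b1 := qBinom_nonneg hq₁ hq₂ r i
    have b2 := qBinom_nonneg hq₁ hq₂ s (r' - i)
    have hnn : 0 ≤ qFact q r' * qFact q s' * (qBinom q r i * qBinom q s (r' - i)) := by
      positivity
    calc q ^ ((r - i) * (r' - i) + k * (r - i) + k * (r' - i)) *
          qFact q r' * qFact q s' * qBinom q r i * qBinom q s (r' - i)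
        = q ^ ((r - i) * (r' - i) + k * (r - i) + k * (r' - i)) *
            (qFact q r' * qFact q s' * (qBinom q r i * qBinom q s (r' - i))) := by ring
      _ ≤ q ^ (k * (r - r') + (r - i) * (r' - i)) *
            (qFact q r' * qFact q s' * (qBinom q r i * qBinom q s (r' - i))) :=
          mul_le_mul_of_nonneg_right hpow hnn
      _ = (q ^ ((r - i) * (r' - i)) * qBinom q r i * qBinom q s (r' - i)) *
            (q ^ (k * (r - r')) * (qFact q r' * qFact q s')) := by
          rw [pow_add]; ring
  refine step1.trans ?_
  rw [← Finset.sum_mul, hV]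
  have hr'le : r' ≤ r + s := by omega
  have p1 := (qFact_pos hq₁ hq₂ r').ne'
  have p2 := (qFact_pos hq₁ hq₂ s').ne'
  have hfact : qBinom q (r + s) r' * (qFact q r' * qFact q s') = qFact q (r + s) := by
    rw [qBinom, if_pos hr'le, show r + s - r' = s' by omega]
    field_simp
  calc qBinom q (r + s) r' * (q ^ (k * (r - r')) * (qFact q r' * qFact q s'))
      = q ^ (k * (r - r')) * (qBinom q (r + s) r' * (qFact q r' * qFact q s')) := by ring
    _ = q ^ (k * (r - r')) * qFact q (r + s) := by rw [hfact]
    _ ≤ q ^ (k * (r - r')) * qFact q (r + s) := le_refl _
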